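/- arXiv:2111.08005 — 2 statements merged into one kernel-verified Lean document; each statement's English description precedes it below -/
import Mathlib

section
/- Let A = P(Λ)T with T invertible and Λ a diagonal 0/1 matrix, and define the norm ‖a‖_T² := ‖Ta‖₂². For 0 ≤ λ ≤ 1 and given x̂ ∈ ℝ^n, ŷ ∈ ℝ^m, the minimizer over z ∈ ℝ^n of (1−λ)‖z − x̂‖_T² + λ·min{‖z − u‖_T² : u ∈ ℝ^n, Au = ŷ} is z* = T⁻¹[λ·Λ·P⁻¹(Λ)·ŷ + (1−λ)·Λ·T·x̂ + (I − Λ)·T·x̂]. -/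
open Matrix

/-- The squared Euclidean norm of a vector. -/
noncomputable def sqnorm {k : ℕ} (v : Fin k → ℝ) : ℝ := ∑ i, (v i) ^ 2

/-- The closed-form proximal solution `z* = T⁻¹[λ Λ P⁻¹ ŷ + (1-λ) Λ T x̂ + (I-Λ) T x̂]`
minimizes `z ↦ (1-λ)‖z - x̂‖_T² + λ · min { ‖z - u‖_T² : A u = ŷ }` over `z`,
where `A = P(Λ) T` and `‖a‖_T² = ‖T a‖₂²`. -/
theorem stmt4 (m n : ℕ) (Λ : Matrix (Fin n) (Fin n) ℝ) (r : Fin m → Fin n)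
    (hΛdiag : Λ.IsDiag) (hΛ01 : ∀ i, Λ i i = 0 ∨ Λ i i = 1)
    (hΛtr : Λ.trace = (m : ℝ))
    (hr : StrictMono r) (hrange : ∀ j, Λ j j = 1 ↔ ∃ i, r i = j)
    (P : Matrix (Fin m) (Fin n) ℝ)
    (hP : P = Matrix.of fun i j => if r i = j then (1 : ℝ) else 0)
    (Pinv : Matrix (Fin n) (Fin m) ℝ) (hPinv : P * Pinv = 1)
    (T : Matrix (Fin n) (Fin n) ℝ) (hT : IsUnit T)
    (lam : ℝ) (hlam0 : 0 ≤ lam) (hlam1 : lam ≤ 1)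
    (xhat : Fin n → ℝ) (yhat : Fin m → ℝ)
    (F : (Fin n → ℝ) → ℝ)
    (hF : F = fun z => (1 - lam) * sqnorm (T.mulVec (z - xhat)) +
      lam * sInf {c : ℝ | ∃ u : Fin n → ℝ, (P * T).mulVec u = yhat ∧
        c = sqnorm (T.mulVec (z - u))})
    (zstar : Fin n → ℝ)
    (hzstar : zstar = T⁻¹.mulVec
      (lam • Λ.mulVec (Pinv.mulVec yhat) + (1 - lam) • Λ.mulVec (T.mulVec xhat) +
        (1 - Λ).mulVec (T.mulVec xhat))) :
    ∀ z : Fin n → ℝ, F zstar ≤ F z := by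
  intro z
  have hTdet : IsUnit T.det := (Matrix.isUnit_iff_isUnit_det T).mp hT
  have hTTinv : T * T⁻¹ = 1 := Matrix.mul_nonsing_inv T hTdet
  set b := T.mulVec xhat with hb
  set c := Pinv.mulVec yhat with hc
  -- diagonal action
  have hdiag : ∀ (x : Fin n → ℝ) j, Λ.mulVec x j = Λ j j * x j := by
    intro x j
    simp only [Matrix.mulVec, dotProduct]
    rw [Finset.sum_eq_single j]
    · intro k _ hk
      rw [hΛdiag (Ne.symm hk)]; ring
    · intro h; exact absurd (Finset.mem_univ j) h
  -- P picks coordinates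
  have hPmul : ∀ (x : Fin n → ℝ) i, P.mulVec x i = x (r i) := by
    intro x i
    subst hP
    simp only [Matrix.mulVec, dotProduct, Matrix.of_apply, ite_mul, one_mul,
      zero_mul]
    simp
  have hcy : ∀ i, c (r i) = yhat i := by
    intro i
    have h1 : (P * Pinv).mulVec yhat = yhat := by rw [hPinv, Matrix.one_mulVec]
    have h2 : (P * Pinv).mulVec yhat i = P.mulVec c i := by
      rw [← Matrix.mulVec_mulVec]
    rw [hPmul] at h2
    rw [← h2, h1]
  have hTcancel : ∀ v : Fin n → ℝ, T.mulVec (T⁻¹.mulVec v) = v := by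
    intro v
    rw [Matrix.mulVec_mulVec, hTTinv, Matrix.one_mulVec]
  -- the inner infimum
  have hinf : ∀ z : Fin n → ℝ,
      sInf {cc : ℝ | ∃ u : Fin n → ℝ, (P * T).mulVec u = yhat ∧
        cc = sqnorm (T.mulVec (z - u))} =
      ∑ j, Λ j j * (T.mulVec z j - c j) ^ 2 := by
    intro z
    set w := T.mulVec z with hw
    set g := ∑ j, Λ j j * (w j - c j) ^ 2 with hg
    have hmem : g ∈ {cc : ℝ | ∃ u : Fin n → ℝ, (P * T).mulVec u = yhat ∧
        cc = sqnorm (T.mulVec (z - u))} := by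
      refine ⟨T⁻¹.mulVec (fun j => if Λ j j = 1 then c j else w j), ?_, ?_⟩
      · funext i
        rw [← Matrix.mulVec_mulVec, hTcancel, hPmul]
        have h1 : Λ (r i) (r i) = 1 := (hrange (r i)).mpr ⟨i, rfl⟩
        simp [h1, hcy i]
      · have hTu : T.mulVec (z - T⁻¹.mulVec (fun j => if Λ j j = 1 then c j else w j))
            = w - fun j => if Λ j j = 1 then c j else w j := by
          rw [Matrix.mulVec_sub, hTcancel]
        rw [hTu, hg, sqnorm]
        apply Finset.sum_congr rfl
        intro j _
        rcases hΛ01 j with h0 | h1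
        · simp [h0]
        · simp [h1]
    have hlb : ∀ a ∈ {cc : ℝ | ∃ u : Fin n → ℝ, (P * T).mulVec u = yhat ∧
        cc = sqnorm (T.mulVec (z - u))}, g ≤ a := by
      rintro a ⟨u, hu, rfl⟩
      have hTu : T.mulVec (z - u) = w - T.mulVec u := Matrix.mulVec_sub T z u
      rw [hTu, sqnorm, hg]
      apply Finset.sum_le_sum
      intro j _
      rcases hΛ01 j with h0 | h1
      · rw [h0, zero_mul]
        positivity
      · have hj : ∃ i, r i = j := (hrange j).mp h1
        obtain ⟨i, rfl⟩ := hj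
        have : (P * T).mulVec u i = T.mulVec u (r i) := by
          rw [← Matrix.mulVec_mulVec, hPmul]
        rw [hu] at this
        rw [h1, one_mul, hcy i, this]
        simp [Pi.sub_apply]
    exact le_antisymm (csInf_le ⟨g, hlb⟩ hmem) (le_csInf ⟨g, hmem⟩ hlb)
  -- closed form for F
  have hFclosed : ∀ z : Fin n → ℝ, F z =
      ∑ j, ((1 - lam) * (T.mulVec z j - b j) ^ 2 +
        lam * (Λ j j * (T.mulVec z j - c j) ^ 2)) := by
    intro z
    rw [hF]
    simp only []
    rw [hinf z]
    have h1 : sqnorm (T.mulVec (z - xhat)) = ∑ j, (T.mulVec z j - b j) ^ 2 := by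
      rw [sqnorm]
      apply Finset.sum_congr rfl
      intro j _
      rw [Matrix.mulVec_sub]
      simp [hb]
    rw [h1, Finset.mul_sum, Finset.mul_sum, ← Finset.sum_add_distrib]
  rw [hFclosed z, hFclosed zstar]
  apply Finset.sum_le_sum
  intro j _
  -- compute T.mulVec zstar j
  have hws : T.mulVec zstar j = lam * (Λ j j * c j) + (1 - lam) * (Λ j j * b j)
      + (b j - Λ j j * b j) := by
    rw [hzstar, hTcancel]
    simp only [Pi.add_apply, Pi.smul_apply, smul_eq_mul]
    rw [hdiag, hdiag, Matrix.sub_mulVec, Matrix.one_mulVec, Pi.sub_apply, hdiag]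
  rcases hΛ01 j with h0 | h1
  · rw [h0] at hws ⊢
    simp only [mul_zero, zero_mul, add_zero, zero_sub, zero_add, sub_zero] at hws ⊢
    rw [hws]
    have h2 : (0:ℝ) ≤ (1 - lam) * (T.mulVec z j - b j) ^ 2 := by
      have : (0:ℝ) ≤ 1 - lam := by linarith
      positivity
    simpa using h2
  · rw [h1] at hws ⊢
    rw [one_mul] at hws ⊢
    have hws' : T.mulVec zstar j = lam * c j + (1 - lam) * b j := by
      rw [hws]; ring
    rw [hws']
    have key : (1 - lam) * (T.mulVec z j - b j) ^ 2 + lam * (T.mulVec z j - c j) ^ 2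
        - ((1 - lam) * (lam * c j + (1 - lam) * b j - b j) ^ 2
          + lam * (lam * c j + (1 - lam) * b j - c j) ^ 2)
        = (T.mulVec z j - (lam * c j + (1 - lam) * b j)) ^ 2 := by ring
    nlinarith [sq_nonneg (T.mulVec z j - (lam * c j + (1 - lam) * b j))]
end

section
/- For a full-rank A ∈ ℝ^{m×n} (m ≤ n) with decomposition A = P(Λ)T, the minimum over u with Au = ŷ of ‖z − u‖_T² equals ‖ΛTz − ΛP⁻¹(Λ)ŷ‖₂², i.e., the T-norm distance from z to the affine constraint set is the Euclidean distance between the Λ-components of Tz and the padded measurement. -/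
open Matrix

/-- For `A = P(Λ) T` full rank, the minimum of `‖z - u‖_T²` over `u` with `A u = ŷ` equals
`‖Λ T z - Λ P⁻¹ ŷ‖₂²` (and it is attained, i.e. it is the least element of the value set). -/
theorem stmt14 (m n : ℕ) (Λ : Matrix (Fin n) (Fin n) ℝ) (r : Fin m → Fin n)
    (hΛdiag : Λ.IsDiag) (hΛ01 : ∀ i, Λ i i = 0 ∨ Λ i i = 1)
    (hΛtr : Λ.trace = (m : ℝ))
    (hr : StrictMono r) (hrange : ∀ j, Λ j j = 1 ↔ ∃ i, r i = j)
    (P : Matrix (Fin m) (Fin n) ℝ)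
    (hP : P = Matrix.of fun i j => if r i = j then (1 : ℝ) else 0)
    (Pinv : Matrix (Fin n) (Fin m) ℝ) (hPinv : P * Pinv = 1)
    (T : Matrix (Fin n) (Fin n) ℝ) (hT : IsUnit T)
    (z : Fin n → ℝ) (yhat : Fin m → ℝ) :
    IsLeast {c : ℝ | ∃ u : Fin n → ℝ, (P * T).mulVec u = yhat ∧
        c = sqnorm (T.mulVec (z - u))}
      (sqnorm (Λ.mulVec (T.mulVec z) - Λ.mulVec (Pinv.mulVec yhat))) := by
  have hdet : IsUnit T.det := (Matrix.isUnit_iff_isUnit_det T).mp hT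
  set w : Fin n → ℝ := T.mulVec z with hw
  set py : Fin n → ℝ := Pinv.mulVec yhat with hpy
  -- diagonal action
  have hdiagmul : ∀ (x : Fin n → ℝ) (j : Fin n), Λ.mulVec x j = Λ j j * x j := by
    intro x j
    simp only [Matrix.mulVec, dotProduct]
    rw [Finset.sum_eq_single j]
    · intro k _ hk
      rw [hΛdiag hk.symm, zero_mul]
    · intro h; exact absurd (Finset.mem_univ j) h
  -- P picks rows
  have hPv : ∀ (v : Fin n → ℝ) (i : Fin m), P.mulVec v i = v (r i) := by
    intro v i
    simp only [hP, Matrix.mulVec, dotProduct, Matrix.of_apply, ite_mul, one_mul,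
      zero_mul]
    simp [Finset.sum_ite_eq]
  -- Pinv entries on selected rows
  have hPinvy : ∀ i : Fin m, py (r i) = yhat i := by
    intro i
    have hrow : ∀ i' : Fin m, Pinv (r i) i' = if i = i' then (1 : ℝ) else 0 := by
      intro i'
      have h1 := congrFun (congrFun hPinv i) i'
      have h2 : (P * Pinv) i i' = Pinv (r i) i' := by
        simp only [hP, Matrix.mul_apply, Matrix.of_apply, ite_mul, one_mul, zero_mul]
        simp [Finset.sum_ite_eq]
      rw [h2] at h1
      rw [h1, Matrix.one_apply]
    simp only [hpy, Matrix.mulVec, dotProduct]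
    rw [Finset.sum_congr rfl (fun i' _ => by rw [hrow i'])]
    simp [Finset.sum_ite_eq]
  constructor
  · -- attained: take u₀ = T⁻¹ v₀
    set v₀ : Fin n → ℝ := fun j => if Λ j j = 1 then py j else w j with hv₀
    refine ⟨T⁻¹.mulVec v₀, ?_, ?_⟩
    · have hTv : T.mulVec (T⁻¹.mulVec v₀) = v₀ := by
        rw [Matrix.mulVec_mulVec, Matrix.mul_nonsing_inv T hdet, Matrix.one_mulVec]
      funext i
      rw [← Matrix.mulVec_mulVec, hTv, hPv]
      have h1 : Λ (r i) (r i) = 1 := (hrange (r i)).mpr ⟨i, rfl⟩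
      simp only [hv₀, h1, if_true]
      exact hPinvy i
    · have hTv : T.mulVec (z - T⁻¹.mulVec v₀) = w - v₀ := by
        rw [Matrix.mulVec_sub, Matrix.mulVec_mulVec, Matrix.mul_nonsing_inv T hdet,
          Matrix.one_mulVec, hw]
      rw [hTv]
      congr 1
      funext j
      simp only [Pi.sub_apply, hdiagmul]
      rcases hΛ01 j with h0 | h1
      · have : Λ j j ≠ 1 := by rw [h0]; norm_num
        simp [hv₀, this, h0]
      · simp [hv₀, h1]
  · -- lower bound
    rintro c ⟨u, hu, rfl⟩
    set v : Fin n → ℝ := T.mulVec u with hv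
    have hvr : ∀ i : Fin m, v (r i) = yhat i := by
      intro i
      have := congrFun hu i
      rw [← Matrix.mulVec_mulVec, hPv] at this
      exact this
    have hTzu : T.mulVec (z - u) = w - v := by
      rw [Matrix.mulVec_sub, hw, hv]
    rw [hTzu]
    unfold sqnorm
    apply Finset.sum_le_sum
    intro j _
    simp only [Pi.sub_apply, hdiagmul]
    rcases hΛ01 j with h0 | h1
    · rw [h0]; simpa using sq_nonneg (w j - v j)
    · obtain ⟨i, hi⟩ := (hrange j).mp h1
      have : py j = v j := by rw [← hi, hPinvy, hvr]
      rw [h1, this]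
      ring_nf
      exact le_refl _
end
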